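/- arXiv:2209.09336 — 3 statements merged into one kernel-verified Lean document; each statement's English description precedes it below -/
import Mathlib

section
/- Let Σ be a finite alphabet, u₁, u₂ ∈ Σ* and v₁, v₂ ∈ Σ⁺. If the ultimately periodic ω-words u₁(v₁)^ω and u₂(v₂)^ω are not equal, then there exists an index n < max(|u₁|, |u₂|) + |v₁|·|v₂| at which they differ, i.e. (u₁(v₁)^ω)(n) ≠ (u₂(v₂)^ω)(n). -/
open Filter

/-- Extended transition function: `dstar δ q x` is the state reached from `q` reading `x`. -/
def dstar {Q A : Type*} (δ : Q → A → Q) (q : Q) (x : List A) : Q := x.foldl δ q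

/-- The run of a deterministic automaton on an ω-word from state `q`. -/
def run {Q A : Type*} (δ : Q → A → Q) (q : Q) (w : ℕ → A) : ℕ → Q
  | 0 => q
  | n + 1 => δ (run δ q w n) (w n)

/-- The set of states visited infinitely often by the run on `w` from `q`. -/
def infOcc {Q A : Type*} (δ : Q → A → Q) (q : Q) (w : ℕ → A) : Set Q :=
  {p | ∃ᶠ n in atTop, run δ q w n = p}

/-- `C` is a strongly connected component of the automaton with transitions `δ`. -/
def IsSCC {Q A : Type*} (δ : Q → A → Q) (C : Set Q) : Prop :=
  C.Nonempty ∧ ∀ q₁ ∈ C, ∀ q₂ ∈ C, ∃ x : List A, x ≠ [] ∧ dstar δ q₁ x = q₂ ∧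
    ∀ x', x' <+: x → dstar δ q₁ x' ∈ C

/-- `q` is reachable from the initial state `qι`. -/
def Reachable {Q A : Type*} (δ : Q → A → Q) (qι q : Q) : Prop :=
  ∃ x : List A, dstar δ qι x = q

/-- The ultimately periodic ω-word `u(v)^ω`. -/
def upWord {A : Type*} (u v : List A) (hv : v ≠ []) : ℕ → A := fun n =>
  if h : n < u.length then u[n]
  else v[(n - u.length) % v.length]'(Nat.mod_lt _ (List.length_pos_iff.mpr hv))

/-- The transition function of the product automaton. -/
def prodStep {Q₁ Q₂ A : Type*} (δ₁ : Q₁ → A → Q₁) (δ₂ : Q₂ → A → Q₂) :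
    Q₁ × Q₂ → A → Q₁ × Q₂ := fun p a => (δ₁ p.1 a, δ₂ p.2 a)

/-- The ω-word `x·z` obtained by prepending the finite word `x` to `z`. -/
def prepend {A : Type*} (x : List A) (z : ℕ → A) : ℕ → A := fun n =>
  if h : n < x.length then x[n] else z (n - x.length)


lemma upWord_add {A : Type*} (u v : List A) (hv : v ≠ []) (n m : ℕ)
    (hn : u.length ≤ n) (hm : v.length ∣ m) :
    upWord u v hv (n + m) = upWord u v hv n := by
  obtain ⟨k, rfl⟩ := hm
  unfold upWord
  rw [dif_neg (by omega), dif_neg (by omega)]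
  congr 1
  have h1 : n + v.length * k - u.length = (n - u.length) + v.length * k := by omega
  rw [h1, Nat.add_mul_mod_self_left]

/-- If two ultimately periodic ω-words `u₁(v₁)^ω` and `u₂(v₂)^ω` differ, then they differ
at some index below `max |u₁| |u₂| + |v₁|·|v₂|`. -/
theorem stmt0 {A : Type*} [Fintype A] (u₁ u₂ v₁ v₂ : List A)
    (hv₁ : v₁ ≠ []) (hv₂ : v₂ ≠ [])
    (hne : upWord u₁ v₁ hv₁ ≠ upWord u₂ v₂ hv₂) :
    ∃ n < max u₁.length u₂.length + v₁.length * v₂.length,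
      upWord u₁ v₁ hv₁ n ≠ upWord u₂ v₂ hv₂ n := by
  by_contra hc
  push_neg at hc
  apply hne
  funext n
  induction n using Nat.strong_induction_on with
  | _ n ih =>
    by_cases hlt : n < max u₁.length u₂.length + v₁.length * v₂.length
    · exact hc n hlt
    · push_neg at hlt
      set L := v₁.length * v₂.length with hL
      have hL1 : v₁.length ∣ L := ⟨v₂.length, rfl⟩
      have hL2 : v₂.length ∣ L := ⟨v₁.length, Nat.mul_comm _ _⟩
      have hLpos : 0 < L := Nat.mul_pos (List.length_pos_iff.mpr hv₁) (List.length_pos_iff.mpr hv₂)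
      have hn : n = (n - L) + L := by omega
      rw [hn, upWord_add u₁ v₁ hv₁ (n - L) L (by omega) hL1,
        upWord_add u₂ v₂ hv₂ (n - L) L (by omega) hL2]
      exact ih (n - L) (by omega)
end

section
/- Let M be a complete deterministic automaton over a finite alphabet Σ with finite state set Q, and let C be a reachable SCC of M. Then there exist finite words u ∈ Σ* and v ∈ Σ⁺ with |u| + |v| ≤ |Q| + |C|² such that inf_M(u(v)^ω) = C. -/
open Filter

section Helpers

variable {Q A : Type*}

lemma dstar_append (δ : Q → A → Q) (q : Q) (x y : List A) :
    dstar δ q (x ++ y) = dstar δ (dstar δ q x) y := List.foldl_append ..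

lemma run_eq_dstar (δ : Q → A → Q) (q : Q) (w : ℕ → A) (n : ℕ) :
    run δ q w n = dstar δ q ((List.range n).map w) := by
  induction n with
  | zero => rfl
  | succ n ih =>
    rw [List.range_succ, List.map_append, dstar_append, ← ih]
    rfl

lemma dstar_cut (δ : Q → A → Q) (q : Q) (x : List A) {i j : ℕ}
    (hij : i ≤ j) (h : dstar δ q (x.take i) = dstar δ q (x.take j)) :
    dstar δ q (x.take i ++ x.drop j) = dstar δ q x := by
  rw [dstar_append, h, ← dstar_append, List.take_append_drop]

lemma reach_short [Fintype Q] (δ : Q → A → Q) (qι q : Q) (h : Reachable δ qι q) :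
    ∃ u : List A, dstar δ qι u = q ∧ u.length ≤ Fintype.card Q := by
  obtain ⟨u, hu⟩ := h
  have key : ∀ n, ∀ u : List A, u.length ≤ n → dstar δ qι u = q →
      ∃ u : List A, dstar δ qι u = q ∧ u.length ≤ Fintype.card Q := by
    intro n
    induction n using Nat.strong_induction_on with
    | _ n ih =>
    intro u hun hu
    by_cases hlen : u.length ≤ Fintype.card Q
    · exact ⟨u, hu, hlen⟩
    · push_neg at hlen
      obtain ⟨i, j, hne, hfe⟩ := Fintype.exists_ne_map_eq_of_card_lt
        (fun m : Fin (u.length + 1) => dstar δ qι (u.take m)) (by simp only [Fintype.card_fin]; omega)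
      wlog hij : (i : ℕ) < (j : ℕ) generalizing i j
      · have hij' : (i : ℕ) ≠ (j : ℕ) := fun h => hne (Fin.ext h)
        exact this j i hne.symm hfe.symm (by omega)
      have hjlen : (j : ℕ) ≤ u.length := by omega
      have hlt : (u.take i ++ u.drop j).length < n := by
        have h1 : (u.take ↑i).length = i := by simp; omega
        have h2 : (u.drop ↑j).length = u.length - j := by simp
        rw [List.length_append]
        omega
      exact ih _ hlt _ le_rfl (by rw [dstar_cut δ qι u hij.le hfe]; exact hu)
  exact key u.length u le_rfl hu

end Helpers

section Helpers2

variable {Q A : Type*}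

lemma prefix_split {x1 x2 y : List A} (h : y <+: x1 ++ x2) :
    y <+: x1 ∨ ∃ z, z <+: x2 ∧ y = x1 ++ z := by
  by_cases hl : y.length ≤ x1.length
  · exact Or.inl (List.prefix_of_prefix_length_le h (List.prefix_append x1 x2) hl)
  · right
    obtain ⟨m, hm⟩ : ∃ m, y.length = x1.length + m := ⟨y.length - x1.length, by omega⟩
    refine ⟨x2.take m, List.take_prefix _ _, ?_⟩
    rw [List.prefix_iff_eq_take.mp h, hm, List.take_append, List.take_of_length_le (Nat.le_add_right _ _), Nat.add_sub_cancel_left]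

lemma scc_short [Fintype Q] (δ : Q → A → Q) (C : Set Q) (q1 q2 : Q)
    (x : List A) (hne : x ≠ []) (hx : dstar δ q1 x = q2)
    (hpre : ∀ y, y <+: x → dstar δ q1 y ∈ C) :
    ∃ x' : List A, x' ≠ [] ∧ x'.length ≤ C.ncard ∧ dstar δ q1 x' = q2 ∧
      ∀ y, y <+: x' → dstar δ q1 y ∈ C := by
  have hCfin : C.Finite := C.toFinite
  haveI : Fintype C := hCfin.fintype
  have hcard : Fintype.card C = C.ncard := by
    rw [← Nat.card_coe_set_eq, Nat.card_eq_fintype_card]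
  have key : ∀ n, ∀ x : List A, x.length ≤ n → x ≠ [] → dstar δ q1 x = q2 →
      (∀ y, y <+: x → dstar δ q1 y ∈ C) →
      ∃ x' : List A, x' ≠ [] ∧ x'.length ≤ C.ncard ∧ dstar δ q1 x' = q2 ∧
        ∀ y, y <+: x' → dstar δ q1 y ∈ C := by
    intro n
    induction n using Nat.strong_induction_on with
    | _ n ih =>
    intro x hxn hne hx hpre
    by_cases hlen : x.length ≤ C.ncard
    · exact ⟨x, hne, hlen, hx, hpre⟩
    · push_neg at hlen
      set f : Fin x.length → C := fun m =>
        ⟨dstar δ q1 (x.take ((m : ℕ)+1)), hpre _ (List.take_prefix _ _)⟩ with hf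
      obtain ⟨i, j, hij0, hfe⟩ := Fintype.exists_ne_map_eq_of_card_lt f
        (by rw [Fintype.card_fin, hcard]; exact hlen)
      wlog hij : (i : ℕ) < (j : ℕ) generalizing i j
      · have hij' : (i : ℕ) ≠ (j : ℕ) := fun h => hij0 (Fin.ext h)
        exact this j i hij0.symm hfe.symm (by omega)
      have heq : dstar δ q1 (x.take ((i : ℕ)+1)) = dstar δ q1 (x.take ((j : ℕ)+1)) :=
        congrArg Subtype.val hfe
      set i' := (i : ℕ) + 1
      set j' := (j : ℕ) + 1
      have hj'le : j' ≤ x.length := j.2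
      have hxpos : 0 < x.length := List.length_pos_iff.mpr hne
      have hti : (x.take i').length = i' := by simp [i']
      have htd : (x.drop j').length = x.length - j' := by simp
      have hlt : (x.take i' ++ x.drop j').length < n := by
        rw [List.length_append]; omega
      refine ih _ hlt _ le_rfl ?_ ?_ ?_
      · intro h
        have := congrArg List.length h
        rw [List.length_append, hti] at this
        simp at this
      · rw [dstar_cut δ q1 x (by omega) heq]; exact hx
      · intro y hy
        rcases prefix_split hy with h | ⟨z, hz, rfl⟩
        · exact hpre y (h.trans (List.take_prefix _ _))
        · rw [dstar_append, heq, ← dstar_append]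
          have hz' : x.take j' ++ z = x.take (j' + z.length) := by
            conv_rhs => rw [List.take_add]
            rw [← List.prefix_iff_eq_take.mp hz]
          rw [hz']
          exact hpre _ (List.take_prefix _ _)
  exact key x.length x le_rfl hne hx hpre

lemma tour [Fintype Q] (δ : Q → A → Q) (C : Set Q) (hC : IsSCC δ C) :
    ∀ L : List Q, (∀ c ∈ L, c ∈ C) → ∀ q1 ∈ C, ∀ q2 ∈ C,
    ∃ x : List A, x ≠ [] ∧ x.length ≤ (L.length + 1) * C.ncard ∧ dstar δ q1 x = q2 ∧
      (∀ y, y <+: x → dstar δ q1 y ∈ C) ∧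
      ∀ c ∈ L, ∃ j ≤ x.length, dstar δ q1 (x.take j) = c := by
  intro L
  induction L with
  | nil =>
    intro _ q1 h1 q2 h2
    obtain ⟨x, hne, hx, hpre⟩ := hC.2 q1 h1 q2 h2
    obtain ⟨x', h1', h2', h3', h4'⟩ := scc_short δ C q1 q2 x hne hx hpre
    exact ⟨x', h1', by simpa using h2', h3', h4', by simp⟩
  | cons c L ih =>
    intro hL q1 h1 q2 h2
    have hc : c ∈ C := hL c (by simp)
    obtain ⟨x0, hne0, hx0, hpre0⟩ := hC.2 q1 h1 c hc
    obtain ⟨x1, hne1, hlen1, hx1, hpre1⟩ := scc_short δ C q1 c x0 hne0 hx0 hpre0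
    obtain ⟨x2, hne2, hlen2, hx2, hpre2, hvis2⟩ :=
      ih (fun c' h' => hL c' (by simp [h'])) c hc q2 h2
    refine ⟨x1 ++ x2, by simp [hne1], ?_, ?_, ?_, ?_⟩
    · calc (x1 ++ x2).length = x1.length + x2.length := List.length_append
        _ ≤ C.ncard + (L.length + 1) * C.ncard := add_le_add hlen1 hlen2
        _ = ((c :: L).length + 1) * C.ncard := by simp [List.length_cons]; ring
    · rw [dstar_append, hx1, hx2]
    · intro y hy
      rcases prefix_split hy with h | ⟨z, hz, rfl⟩
      · exact hpre1 y h
      · rw [dstar_append, hx1]; exact hpre2 z hz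
    · intro c' hc'
      rcases List.mem_cons.mp hc' with rfl | h'
      · exact ⟨x1.length, by simp, by rw [List.take_left]; exact hx1⟩
      · obtain ⟨j, hj, hdj⟩ := hvis2 c' h'
        refine ⟨x1.length + j, by rw [List.length_append]; omega, ?_⟩
        rw [List.take_append, List.take_of_length_le (Nat.le_add_right _ _), Nat.add_sub_cancel_left, dstar_append, hx1, hdj]

end Helpers2

section Main
variable {Q A : Type*}

lemma run_up (δ : Q → A → Q) (qι : Q) (u v : List A) (hv : v ≠ [])
    (q0 : Q) (hu : dstar δ qι u = q0) (hvq : dstar δ q0 v = q0) (n : ℕ) :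
    run δ qι (upWord u v hv) (u.length + n) = dstar δ q0 (v.take (n % v.length)) := by
  have hvpos : 0 < v.length := List.length_pos_iff.mpr hv
  induction n with
  | zero =>
    rw [Nat.add_zero, run_eq_dstar]
    have hmap : (List.range u.length).map (upWord u v hv) = u := by
      apply List.ext_getElem
      · simp
      · intro i h1 h2
        simp only [List.getElem_map, List.getElem_range]
        simp [upWord, h2]
    rw [hmap, hu, Nat.zero_mod, List.take_zero]
    rfl
  | succ n ih =>
    have hw : upWord u v hv (u.length + n) =
        v[n % v.length]'(Nat.mod_lt _ hvpos) := by
      simp [upWord]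
    show δ (run δ qι (upWord u v hv) (u.length + n)) (upWord u v hv (u.length + n)) = _
    rw [ih, hw]
    have hmlt : n % v.length < v.length := Nat.mod_lt _ hvpos
    have step : δ (dstar δ q0 (v.take (n % v.length))) (v[n % v.length]'hmlt) =
        dstar δ q0 (v.take (n % v.length + 1)) := by
      rw [List.take_succ, List.getElem?_eq_getElem hmlt, dstar_append]
      rfl
    rw [step]
    have hmod : (n + 1) % v.length = (n % v.length + 1) % v.length := by
      conv_lhs => rw [← Nat.mod_add_mod]
    rw [hmod]
    by_cases hcase : n % v.length + 1 < v.length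
    · rw [Nat.mod_eq_of_lt hcase]
    · have h1 : n % v.length + 1 = v.length := by omega
      rw [h1, Nat.mod_self, List.take_length, hvq, List.take_zero]
      rfl

end Main

/-- For every reachable SCC `C` there is an ultimately periodic word `u(v)^ω` of length at
most `|Q| + |C|²` whose set of infinitely visited states is exactly `C`. -/
theorem stmt3 {A Q : Type*} [Fintype A] [Fintype Q] (δ : Q → A → Q) (qι : Q)
    (C : Set Q) (hC : IsSCC δ C) (hreach : ∀ q ∈ C, Reachable δ qι q) :
    ∃ (u v : List A) (hv : v ≠ []),
      u.length + v.length ≤ Fintype.card Q + C.ncard ^ 2 ∧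
      infOcc δ qι (upWord u v hv) = C := by
  classical
  obtain ⟨c0, hc0⟩ := hC.1
  have hCfin : C.Finite := C.toFinite
  set L := hCfin.toFinset.toList with hLdef
  have hmemL : ∀ c, c ∈ L ↔ c ∈ C := by
    intro c; rw [hLdef, Finset.mem_toList, Set.Finite.mem_toFinset]
  have hlenL : L.length = C.ncard := by
    rw [hLdef, Finset.length_toList, Set.ncard_eq_toFinset_card]
  have hc0L : c0 ∈ L := (hmemL c0).mpr hc0
  set L' := L.erase c0 with hL'def
  have hlenL' : L'.length = C.ncard - 1 := by
    rw [hL'def, List.length_erase_of_mem hc0L, hlenL]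
  have hL'C : ∀ c ∈ L', c ∈ C := fun c h => (hmemL c).mp (List.mem_of_mem_erase h)
  obtain ⟨v, hvne, hvlen, hvq, hvpre, hvvis⟩ := tour δ C hC L' hL'C c0 hc0 c0 hc0
  have hncard : 1 ≤ C.ncard := (Set.ncard_pos hCfin).mpr ⟨c0, hc0⟩
  have hvlen' : v.length ≤ C.ncard ^ 2 := by
    calc v.length ≤ (L'.length + 1) * C.ncard := hvlen
      _ = C.ncard * C.ncard := by rw [hlenL']; congr 1; omega
      _ = C.ncard ^ 2 := (sq _).symm
  obtain ⟨u, hu, hulen⟩ := reach_short δ qι c0 (hreach c0 hc0)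
  have hvpos : 0 < v.length := List.length_pos_iff.mpr hvne
  have hrun := run_up δ qι u v hvne c0 hu hvq
  refine ⟨u, v, hvne, add_le_add hulen hvlen', ?_⟩
  ext p
  simp only [infOcc, Set.mem_setOf_eq]
  constructor
  · intro hfreq
    obtain ⟨n, hn, hp⟩ := (frequently_atTop.mp hfreq) u.length
    obtain ⟨n', rfl⟩ : ∃ n', n = u.length + n' := ⟨n - u.length, by omega⟩
    rw [hrun n'] at hp
    rw [← hp]
    exact hvpre _ (List.take_prefix _ _)
  · intro hp
    have hj : ∃ j ≤ v.length, dstar δ c0 (v.take j) = p := by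
      by_cases hpc : p = c0
      · exact ⟨0, by omega, by rw [List.take_zero]; exact hpc.symm⟩
      · exact hvvis p ((List.mem_erase_of_ne hpc).mpr ((hmemL p).mpr hp))
    obtain ⟨j, hjle, hj⟩ := hj
    have hjmod : dstar δ c0 (v.take (j % v.length)) = p := by
      rcases eq_or_lt_of_le hjle with rfl | hlt
      · rw [List.take_length] at hj
        rw [Nat.mod_self, List.take_zero]
        exact hvq.symm.trans hj
      · rw [Nat.mod_eq_of_lt hlt]; exact hj
    rw [frequently_atTop]
    intro N
    refine ⟨u.length + (j % v.length + N * v.length), ?_, ?_⟩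
    · have : N ≤ N * v.length := Nat.le_mul_of_pos_right N hvpos
      omega
    · rw [hrun, Nat.add_mul_mod_self_right, Nat.mod_mod_of_dvd j dvd_rfl, hjmod]
end

section
/- Let M be a complete deterministic automaton over a finite alphabet Σ with finite state set, let F be an SCC of M, and let q ∈ F. Let L(M, F, q) denote the set of ω-words w such that the run of M on w starting at q visits only states of F and visits every state of F infinitely often. Then there exists a complete deterministic Büchi acceptor B over Σ with |F|² + 1 states such that ⟦B⟧ = L(M, F, q). -/
open Filter

/-- `L(M, F, q)`: the ω-words whose run from `q` stays in `F` and visits every state of `F`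
infinitely often. -/
def LMFq {Q A : Type*} (δ : Q → A → Q) (F : Set Q) (q : Q) : Set (ℕ → A) :=
  {w | (∀ n : ℕ, run δ q w n ∈ F) ∧ F ⊆ infOcc δ q w}


open Classical in
/-- Transition function of the Büchi acceptor tracking (current state, awaited state),
encoded via an enumeration `e : Fin k ≃ F`, with `none` as the rejecting sink. -/
noncomputable def bstep {A Q : Type*} (δ : Q → A → Q) (F : Set Q) {k : ℕ} [NeZero k] (e : Fin k ≃ F) :
    Option (Fin k × Fin k) → A → Option (Fin k × Fin k)
  | none, _ => none
  | some (i, j), a =>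
    if h : δ (e i : Q) a ∈ F then
      some (e.symm ⟨δ (e i : Q) a, h⟩, if i = j then j + 1 else j)
    else none

theorem run_add' {Q A : Type*} (δ : Q → A → Q) (q : Q) (w : ℕ → A) (n m : ℕ) :
    run δ q w (n + m) = run δ (run δ q w n) (fun i => w (n + i)) m := by
  induction m with
  | zero => rfl
  | succ m ih =>
      have h : n + (m + 1) = (n + m) + 1 := by ring
      rw [h]
      simp only [run, ih]

theorem run_none {A Q : Type*} (δ : Q → A → Q) (F : Set Q) {k : ℕ} [NeZero k] (e : Fin k ≃ F)
    (w : ℕ → A) (t : ℕ) : run (bstep δ F e) none w t = none := by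
  induction t with
  | zero => rfl
  | succ t ih => simp only [run, ih]; rfl

/-- For an SCC `F` and `q ∈ F`, there is a complete deterministic Büchi acceptor with
`|F|² + 1` states accepting exactly `L(M, F, q)`. -/
theorem stmt14 {A Q : Type*} [Fintype A] [Fintype Q] (δ : Q → A → Q) (F : Set Q)
    (hF : IsSCC δ F) (q : Q) (hq : q ∈ F) :
    ∃ (Q' : Type) (_ : Fintype Q') (δ' : Q' → A → Q') (init' : Q') (F' : Set Q'),
      Fintype.card Q' = F.ncard ^ 2 + 1 ∧
      ∀ w : ℕ → A, (infOcc δ' init' w ∩ F').Nonempty ↔ w ∈ LMFq δ F q := by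
  classical
  haveI : Fintype ↥F := F.toFinite.fintype
  set k := Fintype.card ↥F with hk
  haveI : Nonempty ↥F := hF.1.to_subtype
  have hk0 : 0 < k := Fintype.card_pos
  haveI : NeZero k := ⟨hk0.ne'⟩
  let e : Fin k ≃ ↥F := (Fintype.equivFin ↥F).symm
  have hcardF : F.ncard = k := by
    rw [Set.ncard_eq_toFinset_card', Set.toFinset_card]
  let j0 : Fin k := e.symm ⟨q, hq⟩
  let B := bstep δ F e
  let init : Option (Fin k × Fin k) := some (j0, j0)
  refine ⟨Option (Fin k × Fin k), inferInstance, B, init,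
    {s | ∃ i, s = some (i, i)}, ?_, ?_⟩
  · simp [Fintype.card_option, Fintype.card_prod, hcardF, sq]
  intro w
  -- basic step lemmas
  have hstep_pos : ∀ (i j : Fin k) (a : A) (h : δ (e i : Q) a ∈ F),
      B (some (i, j)) a = some (e.symm ⟨δ (e i : Q) a, h⟩, if i = j then j + 1 else j) := by
    intro i j a h
    show bstep δ F e (some (i, j)) a = _
    rw [bstep]
    rw [dif_pos h]
  have hstep_neg : ∀ (i j : Fin k) (a : A), δ (e i : Q) a ∉ F → B (some (i, j)) a = none := by
    intro i j a h
    show bstep δ F e (some (i, j)) a = _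
    rw [bstep]
    rw [dif_neg h]
  constructor
  · -- forward direction
    rintro ⟨s, hs_inf, i0, rfl⟩
    have hfreq : ∃ᶠ n in atTop, run B init w n = some (i0, i0) := hs_inf
    rw [frequently_atTop] at hfreq
    -- the run never falls into the sink
    have hne : ∀ n, (run B init w n).isSome := by
      intro n
      rcases h : run B init w n with _ | s
      · exfalso
        obtain ⟨m, hm, hm2⟩ := hfreq n
        have : run B init w m = none := by
          have := run_add' B init w n (m - n)
          rw [show n + (m - n) = m by omega, h, run_none] at this
          exact this
        rw [hm2] at this
        exact nomatch this
      · rfl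
    let P : ℕ → Fin k := fun n => ((run B init w n).get (hne n)).1
    let T : ℕ → Fin k := fun n => ((run B init w n).get (hne n)).2
    have hPT : ∀ n, run B init w n = some (P n, T n) := by
      intro n
      rw [← Option.some_get (hne n)]
    have hPT0 : P 0 = j0 ∧ T 0 = j0 := by
      have h0 : run B init w 0 = init := rfl
      rw [hPT 0] at h0
      have := Option.some_injective _ h0
      exact ⟨congrArg Prod.fst this, congrArg Prod.snd this⟩
    have hstep_all : ∀ n, (e (P n) : Q) = run δ q w n →
        (e (P (n+1)) : Q) = run δ q w (n+1) ∧
        T (n+1) = (if P n = T n then T n + 1 else T n) := by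
      intro n hPn
      have h1 : run B init w (n+1) = B (some (P n, T n)) (w n) := by
        show B (run B init w n) (w n) = _
        rw [hPT n]
      by_cases h : δ (e (P n) : Q) (w n) ∈ F
      · rw [hstep_pos (P n) (T n) (w n) h] at h1
        rw [hPT (n+1)] at h1
        have h2 := Option.some_injective _ h1
        have hfst : P (n+1) = e.symm ⟨δ (e (P n) : Q) (w n), h⟩ := congrArg Prod.fst h2
        have hsnd : T (n+1) = (if P n = T n then T n + 1 else T n) := congrArg Prod.snd h2
        constructor
        · rw [hfst, Equiv.apply_symm_apply]
          show δ (e (P n) : Q) (w n) = run δ q w (n+1)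
          rw [hPn]; rfl
        · exact hsnd
      · rw [hstep_neg (P n) (T n) (w n) h] at h1
        exact absurd h1 (by rw [hPT (n+1)]; exact fun h => nomatch h)
    have hP : ∀ n, (e (P n) : Q) = run δ q w n := by
      intro n
      induction n with
      | zero =>
          rw [hPT0.1]
          show ((e (e.symm ⟨q, hq⟩)) : Q) = q
          rw [Equiv.apply_symm_apply]
      | succ n ih => exact (hstep_all n ih).1
    have hT : ∀ n, T (n+1) = (if P n = T n then T n + 1 else T n) :=
      fun n => (hstep_all n (hP n)).2
    have hFmem : ∀ n, run δ q w n ∈ F := by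
      intro n
      rw [← hP n]
      exact (e (P n)).2
    refine ⟨hFmem, ?_⟩
    -- cycling of targets
    have hacc : ∀ N, ∃ n ≥ N, P n = T n := by
      intro N
      obtain ⟨n, hn, h⟩ := hfreq N
      refine ⟨n, hn, ?_⟩
      rw [hPT n] at h
      have h2 := Prod.ext_iff.mp (Option.some_injective _ h)
      exact h2.1.trans h2.2.symm
    have hnext : ∀ (c : Fin k), (∀ N, ∃ n ≥ N, P n = T n ∧ T n = c) →
        (∀ N, ∃ n ≥ N, P n = T n ∧ T n = c + 1) := by
      intro c hc N
      obtain ⟨n, hnN, hPn, hTn⟩ := hc N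
      have hex : ∃ m, n + 1 ≤ m ∧ P m = T m := by
        obtain ⟨m, hm1, hm2⟩ := hacc (n+1)
        exact ⟨m, hm1, hm2⟩
      set m := Nat.find hex with hmdef
      obtain ⟨hm1, hm2⟩ := Nat.find_spec hex
      have hconst : ∀ d, n + 1 + d ≤ m → T (n + 1 + d) = T (n + 1) := by
        intro d
        induction d with
        | zero => intro _; rfl
        | succ d ih =>
            intro hle
            have hlt : n + 1 + d < m := by omega
            have hnacc : ¬ (P (n+1+d) = T (n+1+d)) := by
              intro h
              exact Nat.find_min hex hlt ⟨by omega, h⟩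
            have hstep := hT (n+1+d)
            rw [if_neg hnacc] at hstep
            rw [show n+1+(d+1) = (n+1+d)+1 by ring, hstep]
            exact ih (by omega)
      have hTn1 : T (n+1) = c + 1 := by
        rw [hT n, if_pos hPn, hTn]
      have hTm : T m = c + 1 := by
        have h3 := hconst (m - (n+1)) (by omega)
        rw [show n+1+(m-(n+1)) = m by omega] at h3
        rw [h3, hTn1]
      exact ⟨m, by omega, hm2, hTm⟩
    have hbase : ∀ N, ∃ n ≥ N, P n = T n ∧ T n = i0 := by
      intro N
      obtain ⟨n, hn, h⟩ := hfreq N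
      rw [hPT n] at h
      have h2 := Prod.ext_iff.mp (Option.some_injective _ h)
      exact ⟨n, hn, h2.1.trans h2.2.symm, h2.2⟩
    open Fin.NatCast in
    have hiter : ∀ mn : ℕ, ∀ N, ∃ n ≥ N, P n = T n ∧ T n = i0 + (mn : Fin k) := by
      intro mn
      induction mn with
      | zero =>
          intro N
          obtain ⟨n, hn, h1, h2⟩ := hbase N
          exact ⟨n, hn, h1, by rw [h2]; simp⟩
      | succ mn ih =>
          have := hnext (i0 + (mn : Fin k)) ih
          intro N
          obtain ⟨n, hn, h1, h2⟩ := this N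
          refine ⟨n, hn, h1, ?_⟩
          rw [h2, Nat.cast_add_one, add_assoc]
    have hall : ∀ v : Fin k, ∀ N, ∃ n ≥ N, P n = T n ∧ T n = v := by
      intro v N
      obtain ⟨n, hn, h1, h2⟩ := hiter ((v - i0).val) N
      refine ⟨n, hn, h1, ?_⟩
      rw [h2, Fin.cast_val_eq_self, add_comm, sub_add_cancel]
    intro r hr
    show ∃ᶠ n in atTop, run δ q w n = r
    rw [frequently_atTop]
    intro N
    obtain ⟨n, hn, h1, h2⟩ := hall (e.symm ⟨r, hr⟩) N
    refine ⟨n, hn, ?_⟩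
    rw [← hP n, h1, h2, Equiv.apply_symm_apply]
  · -- backward direction
    rintro ⟨hrunF, hinf⟩
    have hsome : ∀ n, ∃ j : Fin k,
        run B init w n = some (e.symm ⟨run δ q w n, hrunF n⟩, j) := by
      intro n
      induction n with
      | zero => exact ⟨j0, rfl⟩
      | succ n ih =>
          obtain ⟨j, hj⟩ := ih
          set i : Fin k := e.symm ⟨run δ q w n, hrunF n⟩ with hidef
          have hei : (e i : Q) = run δ q w n := by
            rw [hidef, Equiv.apply_symm_apply]
          have h1 : run B init w (n+1) = B (some (i, j)) (w n) := by
            show B (run B init w n) (w n) = _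
            rw [hj]
          have hmem : δ (e i : Q) (w n) ∈ F := by
            rw [hei]
            exact hrunF (n+1)
          rw [hstep_pos i j (w n) hmem] at h1
          refine ⟨if i = j then j + 1 else j, ?_⟩
          have hval : (⟨δ (e i : Q) (w n), hmem⟩ : F) = ⟨run δ q w (n+1), hrunF (n+1)⟩ :=
            Subtype.ext (by show δ (e i : Q) (w n) = run δ q w (n+1); rw [hei]; rfl)
          rw [h1, hval]
    let T : ℕ → Fin k := fun n => Classical.choose (hsome n)
    have hTspec : ∀ n, run B init w n = some (e.symm ⟨run δ q w n, hrunF n⟩, T n) :=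
      fun n => Classical.choose_spec (hsome n)
    have hstepT : ∀ n, run δ q w n ≠ (e (T n) : Q) → T (n+1) = T n := by
      intro n hne
      set i : Fin k := e.symm ⟨run δ q w n, hrunF n⟩ with hidef
      have hei : (e i : Q) = run δ q w n := by rw [hidef, Equiv.apply_symm_apply]
      have h1 : run B init w (n+1) = B (some (i, T n)) (w n) := by
        show B (run B init w n) (w n) = _
        rw [hTspec n]
      have hmem : δ (e i : Q) (w n) ∈ F := by rw [hei]; exact hrunF (n+1)
      rw [hstep_pos i (T n) (w n) hmem] at h1
      have hneq : i ≠ T n := by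
        intro h
        apply hne
        rw [← hei, h]
      rw [if_neg hneq] at h1
      rw [hTspec (n+1)] at h1
      exact congrArg Prod.snd (Option.some_injective _ h1)
    have hacc : ∀ N, ∃ n ≥ N, run δ q w n = (e (T n) : Q) := by
      intro N
      by_contra hcon
      push_neg at hcon
      have hconst : ∀ d, T (N + d) = T N := by
        intro d
        induction d with
        | zero => rfl
        | succ d ih =>
            rw [show N + (d+1) = (N+d) + 1 by ring, hstepT (N+d) ?_, ih]
            intro h
            exact hcon (N+d) (by omega) h
      have hmem : (e (T N) : Q) ∈ F := (e (T N)).2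
      have h4 : ∃ᶠ n in atTop, run δ q w n = (e (T N) : Q) := hinf hmem
      rw [frequently_atTop] at h4
      obtain ⟨n, hn, hrn⟩ := h4 N
      have hTn : T n = T N := by
        have := hconst (n - N)
        rwa [show N + (n - N) = n by omega] at this
      exact hcon n hn (by rw [hTn, hrn])
    have hSinf : {n | ∃ i : Fin k, run B init w n = some (i, i)}.Infinite := by
      rw [← Nat.frequently_atTop_iff_infinite, frequently_atTop]
      intro N
      obtain ⟨n, hn, hrn⟩ := hacc N
      refine ⟨n, hn, T n, ?_⟩
      have h2 : e.symm ⟨run δ q w n, hrunF n⟩ = T n := by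
        rw [Equiv.symm_apply_eq]
        exact Subtype.ext hrn
      rw [hTspec n, h2]
    by_contra hemp
    have hfin : ∀ i : Fin k, {n | run B init w n = some (i, i)}.Finite := by
      intro i
      by_contra hinf2
      apply hemp
      refine ⟨some (i, i), ?_, i, rfl⟩
      show ∃ᶠ n in atTop, run B init w n = some (i, i)
      rw [Nat.frequently_atTop_iff_infinite]
      exact hinf2
    have hsub : {n | ∃ i : Fin k, run B init w n = some (i, i)} ⊆
        ⋃ i : Fin k, {n | run B init w n = some (i, i)} := by
      intro n ⟨i, hi⟩
      exact Set.mem_iUnion.mpr ⟨i, hi⟩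
    exact hSinf ((Set.finite_iUnion hfin).subset hsub)
end
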